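/- For every regular language L ⊆ Σ* there exists a regular language L' ⊆ Σ* such that every word of L' is a canonical word and φ(L') = φ(L). -/

import Mathlib

/-- 2×2 integer matrices. -/
abbrev M2 := Matrix (Fin 2) (Fin 2) ℤ

/-- A matrix belongs to GL(2,ℤ), i.e. has determinant ±1. -/
def IsGL (A : M2) : Prop := A.det = 1 ∨ A.det = -1

/-- The four-letter alphabet Σ = {X, N, S, R}. -/
inductive Alph : Type | X | N | S | R
deriving DecidableEq

instance : Fintype Alph :=
  ⟨{Alph.X, Alph.N, Alph.S, Alph.R}, fun x => by cases x <;> simp⟩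

/-- The matrices assigned to letters of Σ. -/
def phiLetter : Alph → M2
  | Alph.X => !![-1, 0; 0, -1]
  | Alph.N => !![1, 0; 0, -1]
  | Alph.S => !![0, -1; 1, 0]
  | Alph.R => !![0, -1; 1, 1]

/-- The monoid homomorphism φ : Σ* → GL(2,ℤ) (valued in matrices). -/
def phi (w : List Alph) : M2 := (w.map phiLetter).prod

/-- A word over Σ is canonical: no subword SS or RRR, the letter N occurs only in
the first position, and X occurs only in the first position or immediately after N. -/
def Canonical (w : List Alph) : Prop :=
  ¬ [Alph.S, Alph.S] <:+: w ∧
  ¬ [Alph.R, Alph.R, Alph.R] <:+: w ∧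
  (∀ i : Fin w.length, w.get i = Alph.N → (i : ℕ) = 0) ∧
  (∀ i : Fin w.length, w.get i = Alph.X →
      (i : ℕ) = 0 ∨ ((i : ℕ) = 1 ∧ w.get ⟨0, Nat.lt_of_le_of_lt (Nat.zero_le _) i.isLt⟩ = Alph.N))

/-- A subset of GL(2,ℤ) is regular if it is the image under φ of a regular language. -/
def RegularSubset (S : Set M2) : Prop :=
  ∃ L : Language Alph, L.IsRegular ∧ phi '' L = S

namespace CanonAut

open Alph

lemma phi_nil : phi [] = 1 := rfl
lemma phi_cons (a : Alph) (t : List Alph) : phi (a :: t) = phiLetter a * phi t := by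
  simp [phi]
lemma phi_append (s t : List Alph) : phi (s ++ t) = phi s * phi t := by
  simp [phi]

lemma AX : phiLetter X = -1 := by
  show !![(-1 : ℤ), 0; 0, -1] = -1
  ext i j; fin_cases i <;> fin_cases j <;> simp

lemma hSS : phiLetter S * phiLetter S = -1 := by
  ext i j
  fin_cases i <;> fin_cases j <;>
    simp [phiLetter, Matrix.mul_apply, Fin.sum_univ_succ]

lemma hRRR : phiLetter R * phiLetter R * phiLetter R = -1 := by
  ext i j
  fin_cases i <;> fin_cases j <;>
    simp [phiLetter, Matrix.mul_apply, Fin.sum_univ_succ]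

lemma hNN : phiLetter N * phiLetter N = 1 := by
  ext i j
  fin_cases i <;> fin_cases j <;>
    simp [phiLetter, Matrix.mul_apply, Fin.sum_univ_succ]

lemma hSN : phiLetter S * phiLetter N = -(phiLetter N * phiLetter S) := by
  ext i j
  fin_cases i <;> fin_cases j <;>
    simp [phiLetter, Matrix.mul_apply, Fin.sum_univ_succ]

lemma hRN : phiLetter R * phiLetter N
    = phiLetter N * (phiLetter S * (phiLetter R * (phiLetter R * phiLetter S))) := by
  ext i j
  fin_cases i <;> fin_cases j <;>
    simp [phiLetter, Matrix.mul_apply, Fin.sum_univ_succ]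

/-! ### prep functions -/

def prepS (v : List Alph) : Bool × List Alph :=
  match v with
  | Alph.S :: t => (true, t)
  | v => (false, Alph.S :: v)

def prepR (v : List Alph) : Bool × List Alph :=
  match v with
  | Alph.R :: Alph.R :: t => (true, t)
  | v => (false, Alph.R :: v)

lemma prepS_nil : prepS [] = (false, [Alph.S]) := rfl
lemma prepS_S (t : List Alph) : prepS (Alph.S :: t) = (true, t) := rfl
lemma prepS_R (t : List Alph) : prepS (Alph.R :: t) = (false, Alph.S :: Alph.R :: t) := rfl
lemma prepS_X (t : List Alph) : prepS (Alph.X :: t) = (false, Alph.S :: Alph.X :: t) := rfl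
lemma prepS_N (t : List Alph) : prepS (Alph.N :: t) = (false, Alph.S :: Alph.N :: t) := rfl
lemma prepR_nil : prepR [] = (false, [Alph.R]) := rfl
lemma prepR_RR (t : List Alph) : prepR (Alph.R :: Alph.R :: t) = (true, t) := rfl

def prepL (c : Alph) (v : List Alph) : Bool × List Alph :=
  match c with
  | Alph.S => prepS v
  | Alph.R => prepR v
  | Alph.X => (true, v)
  | Alph.N => (false, v)

def prepW : List Alph → List Alph → Bool × List Alph
  | [], v => (false, v)
  | c :: cs, v =>
    let p := prepW cs v
    let q := prepL c p.2
    (xor p.1 q.1, q.2)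

def prepFull (a : Alph) (d g : Bool) (v : List Alph) : Bool × Bool × List Alph :=
  match a with
  | Alph.X => (d, !g, v)
  | Alph.N => (!d, g, v)
  | Alph.S =>
    let p := prepS v
    (d, xor (xor g d) p.1, p.2)
  | Alph.R =>
    if d then
      let p := prepW [Alph.S, Alph.R, Alph.R, Alph.S] v
      (true, xor g p.1, p.2)
    else
      let p := prepR v
      (false, xor g p.1, p.2)

def canonT (w : List Alph) : Bool × Bool × List Alph :=
  w.foldr (fun a c => prepFull a c.1 c.2.1 c.2.2) (false, false, [])

def toWord (c : Bool × Bool × List Alph) : List Alph :=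
  (cond c.1 [Alph.N] []) ++ (cond c.2.1 [Alph.X] []) ++ c.2.2

def sg (b : Bool) : M2 := cond b (-1) 1

lemma sg_mul_comm (b : Bool) (m : M2) : sg b * m = m * sg b := by
  cases b <;> simp [sg]

lemma sg_xor (b c : Bool) : sg (xor b c) = sg b * sg c := by
  cases b <;> cases c <;> simp [sg]

def phiMC (d g : Bool) (v : List Alph) : M2 :=
  (cond d (phiLetter N) 1) * (sg g * phi v)

lemma phi_toWord (c : Bool × Bool × List Alph) : phi (toWord c) = phiMC c.1 c.2.1 c.2.2 := by
  obtain ⟨d, g, v⟩ := c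
  cases d <;> cases g <;>
    simp [toWord, phiMC, sg, phi_append, phi_cons, phi_nil, AX, mul_assoc]

lemma phi_prepS (v : List Alph) :
    phiLetter S * phi v = sg (prepS v).1 * phi (prepS v).2 := by
  match v with
  | [] => simp [prepS, sg, phi_cons]
  | Alph.S :: t =>
    simp only [prepS, phi_cons, ← mul_assoc, hSS, sg]
    simp
  | Alph.X :: t => simp [prepS, sg, phi_cons]
  | Alph.N :: t => simp [prepS, sg, phi_cons]
  | Alph.R :: t => simp [prepS, sg, phi_cons]

lemma phi_prepR (v : List Alph) :
    phiLetter R * phi v = sg (prepR v).1 * phi (prepR v).2 := by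
  match v with
  | Alph.R :: Alph.R :: t =>
    simp only [prepR, phi_cons, ← mul_assoc, hRRR, sg]
    simp
  | [] => simp [prepR, sg, phi_cons]
  | [Alph.R] => simp [prepR, sg, phi_cons]
  | Alph.R :: Alph.X :: t => simp [prepR, sg, phi_cons]
  | Alph.R :: Alph.N :: t => simp [prepR, sg, phi_cons]
  | Alph.R :: Alph.S :: t => simp [prepR, sg, phi_cons]
  | Alph.X :: t => simp [prepR, sg, phi_cons]
  | Alph.N :: t => simp [prepR, sg, phi_cons]
  | Alph.S :: t => simp [prepR, sg, phi_cons]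

lemma phi_prepL (c : Alph) (hc : c ≠ Alph.N) (v : List Alph) :
    phiLetter c * phi v = sg (prepL c v).1 * phi (prepL c v).2 := by
  cases c with
  | X => simp [prepL, sg, AX]
  | N => exact absurd rfl hc
  | S => exact phi_prepS v
  | R => exact phi_prepR v

lemma phi_prepW (l : List Alph) (hN : Alph.N ∉ l) (v : List Alph) :
    phi l * phi v = sg (prepW l v).1 * phi (prepW l v).2 := by
  induction l generalizing v with
  | nil => simp [prepW, sg, phi_nil]
  | cons c cs ih =>
    have hc : c ≠ Alph.N := by rintro rfl; exact hN List.mem_cons_self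
    have hcs : Alph.N ∉ cs := fun h => hN (List.mem_cons_of_mem _ h)
    show phi (c :: cs) * phi v = _
    rw [phi_cons, mul_assoc, ih hcs]
    rw [show phiLetter c * (sg (prepW cs v).1 * phi (prepW cs v).2)
        = sg (prepW cs v).1 * (phiLetter c * phi (prepW cs v).2) by
      rw [← mul_assoc, ← sg_mul_comm, mul_assoc]]
    rw [phi_prepL c hc]
    show _ = sg (xor (prepW cs v).1 (prepL c (prepW cs v).2).1) * phi (prepL c (prepW cs v).2).2
    rw [sg_xor, mul_assoc]

lemma hSN' (z : M2) : phiLetter S * (phiLetter N * z) = -(phiLetter N * (phiLetter S * z)) := by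
  rw [← mul_assoc, hSN]; simp [mul_assoc]

lemma phi_prepFull (a : Alph) (d g : Bool) (v : List Alph) :
    phiMC (prepFull a d g v).1 (prepFull a d g v).2.1 (prepFull a d g v).2.2
      = phiLetter a * phiMC d g v := by
  cases a with
  | X =>
    cases d <;> cases g <;>
      simp [prepFull, phiMC, sg, AX, mul_assoc, neg_mul, mul_neg]
  | N =>
    cases d <;>
      simp [prepFull, phiMC, sg, ← mul_assoc, hNN]
  | S =>
    rcases hp : prepS v with ⟨g2, v2⟩
    have h := phi_prepS v
    rw [hp] at h
    have h2 : phi v2 = sg g2 * (phiLetter S * phi v) := by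
      cases g2
      · simp [sg] at h ⊢; rw [h]
      · simp [sg] at h ⊢; rw [h, neg_neg]
    cases d <;> cases g <;> cases g2 <;>
      simp [prepFull, hp, phiMC, sg, h2, hSN', mul_assoc, neg_mul, mul_neg]
  | R =>
    cases d with
    | false =>
      rcases hp : prepR v with ⟨g2, v2⟩
      have h := phi_prepR v
      rw [hp] at h
      have h2 : phi v2 = sg g2 * (phiLetter R * phi v) := by
        cases g2
        · simp [sg] at h ⊢; rw [h]
        · simp [sg] at h ⊢; rw [h, neg_neg]
      cases g <;> cases g2 <;>
        simp [prepFull, hp, phiMC, sg, h2, mul_assoc, neg_mul, mul_neg]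
    | true =>
      rcases hp : prepW [Alph.S, Alph.R, Alph.R, Alph.S] v with ⟨g2, v2⟩
      have h := phi_prepW [Alph.S, Alph.R, Alph.R, Alph.S] (by decide) v
      rw [hp] at h
      have hphi : phi [Alph.S, Alph.R, Alph.R, Alph.S] * phi v
          = phiLetter S * (phiLetter R * (phiLetter R * (phiLetter S * phi v))) := by
        simp [phi_cons, phi_nil, mul_assoc]
      rw [hphi] at h
      have key : phiLetter R * (phiLetter N * phi v) = phiLetter N * (sg g2 * phi v2) := by
        rw [← mul_assoc, hRN]
        simp only [mul_assoc]
        rw [h]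
      cases g <;> cases g2 <;>
        simp [prepFull, hp, phiMC, sg, key, mul_assoc, neg_mul, mul_neg] <;>
        simp [← mul_assoc, ← key, mul_assoc, neg_mul, mul_neg]

lemma canonT_cons (a : Alph) (w : List Alph) :
    canonT (a :: w) = prepFull a (canonT w).1 (canonT w).2.1 (canonT w).2.2 := rfl

lemma phi_canonT (w : List Alph) : phi (toWord (canonT w)) = phi w := by
  induction w with
  | nil => rfl
  | cons a t ih =>
    rw [phi_cons, ← ih, phi_toWord, phi_toWord, canonT_cons]
    exact phi_prepFull a (canonT t).1 (canonT t).2.1 (canonT t).2.2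

/-! ### GoodCore and Canonical -/

def SRonly (v : List Alph) : Prop := ∀ a ∈ v, a = Alph.S ∨ a = Alph.R

def GoodCore (v : List Alph) : Prop :=
  SRonly v ∧ ¬ ([Alph.S, Alph.S] <:+: v) ∧ ¬ ([Alph.R, Alph.R, Alph.R] <:+: v)

lemma srOnly_tail {a : Alph} {t : List Alph} (h : SRonly (a :: t)) : SRonly t :=
  fun x hx => h x (List.mem_cons_of_mem _ hx)

lemma notInfix_tail {p : List Alph} {a : Alph} {t : List Alph}
    (h : ¬ p <:+: a :: t) : ¬ p <:+: t := fun hh => h (hh.trans (List.suffix_cons a t).isInfix)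

lemma goodCore_tail {a : Alph} {t : List Alph} (h : GoodCore (a :: t)) : GoodCore t :=
  ⟨srOnly_tail h.1, notInfix_tail h.2.1, notInfix_tail h.2.2⟩

lemma notSS_cons {v : List Alph} (h : ¬ [Alph.S, Alph.S] <:+: v)
    (hv : ∀ t, v ≠ Alph.S :: t) : ¬ [Alph.S, Alph.S] <:+: Alph.S :: v := by
  rw [List.infix_cons_iff]
  rintro (hp | hi)
  · rw [List.cons_prefix_cons] at hp
    obtain ⟨-, hp⟩ := hp
    rcases v with - | ⟨b, t⟩
    · simp at hp
    · rw [List.cons_prefix_cons] at hp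
      exact hv t (by rw [← hp.1])
  · exact h hi

lemma notSS_consR {v : List Alph} (h : ¬ [Alph.S, Alph.S] <:+: v) :
    ¬ [Alph.S, Alph.S] <:+: Alph.R :: v := by
  rw [List.infix_cons_iff]
  rintro (hp | hi)
  · rw [List.cons_prefix_cons] at hp; exact absurd hp.1 (by decide)
  · exact h hi

lemma notRRR_consS {v : List Alph} (h : ¬ [Alph.R, Alph.R, Alph.R] <:+: v) :
    ¬ [Alph.R, Alph.R, Alph.R] <:+: Alph.S :: v := by
  rw [List.infix_cons_iff]
  rintro (hp | hi)
  · rw [List.cons_prefix_cons] at hp; exact absurd hp.1 (by decide)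
  · exact h hi

lemma notRRR_cons {v : List Alph} (h : ¬ [Alph.R, Alph.R, Alph.R] <:+: v)
    (hv : ∀ t, v ≠ Alph.R :: Alph.R :: t) : ¬ [Alph.R, Alph.R, Alph.R] <:+: Alph.R :: v := by
  rw [List.infix_cons_iff]
  rintro (hp | hi)
  · rw [List.cons_prefix_cons] at hp
    obtain ⟨-, hp⟩ := hp
    rcases v with - | ⟨b, t⟩
    · simp at hp
    · rw [List.cons_prefix_cons] at hp
      rcases t with - | ⟨c, t'⟩
      · simp at hp
      · rw [List.cons_prefix_cons] at hp
        exact hv t' (by rw [← hp.1, ← hp.2.1])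
  · exact h hi

lemma good_prepS {v : List Alph} (h : GoodCore v) : GoodCore (prepS v).2 := by
  obtain ⟨h1, h2, h3⟩ := h
  have hpush : (∀ t, v ≠ Alph.S :: t) → GoodCore (Alph.S :: v) := by
    intro hv
    refine ⟨?_, notSS_cons h2 hv, notRRR_consS h3⟩
    intro x hx
    rcases List.mem_cons.mp hx with rfl | hx
    · left; rfl
    · exact h1 x hx
  rcases v with - | ⟨a, t⟩
  · rw [prepS_nil]; exact hpush (by simp)
  cases a with
  | S => rw [prepS_S]; exact goodCore_tail ⟨h1, h2, h3⟩
  | R => rw [prepS_R]; exact hpush (by simp)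
  | X => exact absurd (h1 Alph.X (by simp)) (by decide)
  | N => exact absurd (h1 Alph.N (by simp)) (by decide)

lemma good_prepR {v : List Alph} (h : GoodCore v) : GoodCore (prepR v).2 := by
  obtain ⟨h1, h2, h3⟩ := h
  have hpush : (∀ t, v ≠ Alph.R :: Alph.R :: t) → GoodCore (Alph.R :: v) := by
    intro hv
    refine ⟨?_, notSS_consR h2, notRRR_cons h3 hv⟩
    intro x hx
    rcases List.mem_cons.mp hx with rfl | hx
    · right; rfl
    · exact h1 x hx
  have hcase : (∀ t, v ≠ Alph.R :: Alph.R :: t) → GoodCore (prepR v).2 := by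
    intro hv
    have : prepR v = (false, Alph.R :: v) := by
      rcases v with - | ⟨a, t⟩
      · rfl
      cases a with
      | R =>
        rcases t with - | ⟨b, t'⟩
        · rfl
        cases b with
        | R => exact absurd rfl (hv t')
        | S => rfl
        | X => rfl
        | N => rfl
      | S => rfl
      | X => rfl
      | N => rfl
    rw [this]
    exact hpush hv
  by_cases hv : ∀ t, v ≠ Alph.R :: Alph.R :: t
  · exact hcase hv
  · push_neg at hv
    obtain ⟨t, rfl⟩ := hv
    rw [prepR_RR]
    exact goodCore_tail (goodCore_tail ⟨h1, h2, h3⟩)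

lemma good_prepL {c : Alph} (hc : c ≠ Alph.N) {v : List Alph} (h : GoodCore v) :
    GoodCore (prepL c v).2 := by
  cases c with
  | X => exact h
  | N => exact absurd rfl hc
  | S => exact good_prepS h
  | R => exact good_prepR h

lemma good_prepW {l : List Alph} (hl : Alph.N ∉ l) {v : List Alph} (h : GoodCore v) :
    GoodCore (prepW l v).2 := by
  induction l generalizing v with
  | nil => exact h
  | cons c cs ih =>
    have hc : c ≠ Alph.N := by rintro rfl; exact hl List.mem_cons_self
    have hcs : Alph.N ∉ cs := fun hh => hl (List.mem_cons_of_mem _ hh)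
    exact good_prepL hc (ih hcs h)

lemma good_prepFull (a : Alph) (d g : Bool) {v : List Alph} (h : GoodCore v) :
    GoodCore (prepFull a d g v).2.2 := by
  cases a with
  | X => exact h
  | N => exact h
  | S => exact good_prepS h
  | R =>
    cases d
    · exact good_prepR h
    · exact good_prepW (by decide) h

lemma good_canonT (w : List Alph) : GoodCore (canonT w).2.2 := by
  induction w with
  | nil =>
    refine ⟨fun x hx => absurd hx List.not_mem_nil, ?_, ?_⟩ <;>
      · rintro ⟨s, t, h⟩; simp [canonT] at h
  | cons a t ih => exact good_prepFull a _ _ ih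

lemma srOnly_get {v : List Alph} (h1 : SRonly v) (i : Fin v.length) :
    v.get i = Alph.S ∨ v.get i = Alph.R := by
  obtain ⟨k, hk⟩ := i
  exact h1 _ (v.get_mem ⟨k, hk⟩)

lemma srOnly_get_ne_N {v : List Alph} (h1 : SRonly v) (i : Fin v.length) :
    v.get i ≠ Alph.N := by
  rcases srOnly_get h1 i with hh | hh <;> rw [hh] <;> decide

lemma srOnly_get_ne_X {v : List Alph} (h1 : SRonly v) (i : Fin v.length) :
    v.get i ≠ Alph.X := by
  rcases srOnly_get h1 i with hh | hh <;> rw [hh] <;> decide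

lemma canonical_core {v : List Alph} (h : GoodCore v) : Canonical v := by
  refine ⟨h.2.1, h.2.2, ?_, ?_⟩
  · intro i hi; exact absurd hi (srOnly_get_ne_N h.1 i)
  · intro i hi; exact absurd hi (srOnly_get_ne_X h.1 i)

lemma canonical_X {v : List Alph} (h : GoodCore v) : Canonical (Alph.X :: v) := by
  obtain ⟨h1, h2, h3⟩ := h
  have hSSx : ∀ a, a ≠ Alph.S → ¬ [Alph.S, Alph.S] <:+: a :: v := by
    intro a ha hh
    rw [List.infix_cons_iff] at hh
    rcases hh with hp | hi
    · rw [List.cons_prefix_cons] at hp; exact ha hp.1.symm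
    · exact h2 hi
  have hRRx : ∀ a, a ≠ Alph.R → ¬ [Alph.R, Alph.R, Alph.R] <:+: a :: v := by
    intro a ha hh
    rw [List.infix_cons_iff] at hh
    rcases hh with hp | hi
    · rw [List.cons_prefix_cons] at hp; exact ha hp.1.symm
    · exact h3 hi
  refine ⟨hSSx Alph.X (by decide), hRRx Alph.X (by decide), ?_, ?_⟩
  · rintro ⟨k, hk⟩ hi
    cases k with
    | zero => rfl
    | succ m =>
      have hm : m < v.length := by simpa using hk
      exact absurd hi (srOnly_get_ne_N h1 ⟨m, hm⟩)
  · rintro ⟨k, hk⟩ hi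
    cases k with
    | zero => left; rfl
    | succ m =>
      have hm : m < v.length := by simpa using hk
      exact absurd hi (srOnly_get_ne_X h1 ⟨m, hm⟩)

lemma canonical_N {v : List Alph} (h : GoodCore v) : Canonical (Alph.N :: v) := by
  obtain ⟨h1, h2, h3⟩ := h
  have hSSx : ¬ [Alph.S, Alph.S] <:+: Alph.N :: v := by
    intro hh
    rw [List.infix_cons_iff] at hh
    rcases hh with hp | hi
    · rw [List.cons_prefix_cons] at hp; exact absurd hp.1 (by decide)
    · exact h2 hi
  have hRRx : ¬ [Alph.R, Alph.R, Alph.R] <:+: Alph.N :: v := by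
    intro hh
    rw [List.infix_cons_iff] at hh
    rcases hh with hp | hi
    · rw [List.cons_prefix_cons] at hp; exact absurd hp.1 (by decide)
    · exact h3 hi
  refine ⟨hSSx, hRRx, ?_, ?_⟩
  · rintro ⟨k, hk⟩ hi
    cases k with
    | zero => rfl
    | succ m =>
      have hm : m < v.length := by simpa using hk
      exact absurd hi (srOnly_get_ne_N h1 ⟨m, hm⟩)
  · rintro ⟨k, hk⟩ hi
    cases k with
    | zero => left; rfl
    | succ m =>
      have hm : m < v.length := by simpa using hk
      exact absurd hi (srOnly_get_ne_X h1 ⟨m, hm⟩)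

lemma canonical_NX {v : List Alph} (h : GoodCore v) : Canonical (Alph.N :: Alph.X :: v) := by
  obtain ⟨h1, h2, h3⟩ := h
  have hSSv : ¬ [Alph.S, Alph.S] <:+: Alph.X :: v := by
    intro hh
    rw [List.infix_cons_iff] at hh
    rcases hh with hp | hi
    · rw [List.cons_prefix_cons] at hp; exact absurd hp.1 (by decide)
    · exact h2 hi
  have hRRv : ¬ [Alph.R, Alph.R, Alph.R] <:+: Alph.X :: v := by
    intro hh
    rw [List.infix_cons_iff] at hh
    rcases hh with hp | hi
    · rw [List.cons_prefix_cons] at hp; exact absurd hp.1 (by decide)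
    · exact h3 hi
  have hSS2 : ¬ [Alph.S, Alph.S] <:+: Alph.N :: Alph.X :: v := by
    intro hh
    rw [List.infix_cons_iff] at hh
    rcases hh with hp | hi
    · rw [List.cons_prefix_cons] at hp; exact absurd hp.1 (by decide)
    · exact hSSv hi
  have hRR2 : ¬ [Alph.R, Alph.R, Alph.R] <:+: Alph.N :: Alph.X :: v := by
    intro hh
    rw [List.infix_cons_iff] at hh
    rcases hh with hp | hi
    · rw [List.cons_prefix_cons] at hp; exact absurd hp.1 (by decide)
    · exact hRRv hi
  refine ⟨hSS2, hRR2, ?_, ?_⟩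
  · rintro ⟨k, hk⟩ hi
    cases k with
    | zero => rfl
    | succ m =>
      cases m with
      | zero => simp at hi
      | succ m' =>
        have hm : m' < v.length := by simpa using hk
        exact absurd hi (srOnly_get_ne_N h1 ⟨m', hm⟩)
  · rintro ⟨k, hk⟩ hi
    cases k with
    | zero => left; rfl
    | succ m =>
      cases m with
      | zero => right; exact ⟨rfl, rfl⟩
      | succ m' =>
        have hm : m' < v.length := by simpa using hk
        exact absurd hi (srOnly_get_ne_X h1 ⟨m', hm⟩)

lemma canonical_toWord {d g : Bool} {v : List Alph} (h : GoodCore v) :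
    Canonical (toWord (d, g, v)) := by
  cases d <;> cases g
  · exact canonical_core h
  · exact canonical_X h
  · exact canonical_N h
  · exact canonical_NX h

/-! ### Locality lemmas -/

lemma prepS_local (u s : List Alph) (h : 1 ≤ u.length) :
    prepS (u ++ s) = ((prepS u).1, (prepS u).2 ++ s) := by
  rcases u with - | ⟨a, t⟩
  · simp at h
  · cases a <;> simp [prepS]

lemma prepS_len (u : List Alph) :
    u.length ≤ (prepS u).2.length + 1 ∧ (prepS u).2.length ≤ u.length + 1 := by
  rcases u with - | ⟨a, t⟩
  · simp [prepS]
  · cases a <;> simp [prepS] <;> omega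

lemma prepR_local (u s : List Alph) (h : 2 ≤ u.length) :
    prepR (u ++ s) = ((prepR u).1, (prepR u).2 ++ s) := by
  rcases u with - | ⟨a, - | ⟨b, t⟩⟩
  · simp at h
  · simp at h
  · cases a <;> cases b <;> simp [prepR]

lemma prepR_len (u : List Alph) :
    u.length ≤ (prepR u).2.length + 2 ∧ (prepR u).2.length ≤ u.length + 1 := by
  rcases u with - | ⟨a, - | ⟨b, t⟩⟩
  · simp [prepR]
  · cases a <;> simp [prepR]
  · cases a <;> cases b <;> simp [prepR] <;> omega

lemma prepL_local (c : Alph) (u s : List Alph) (h : 2 ≤ u.length) :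
    prepL c (u ++ s) = ((prepL c u).1, (prepL c u).2 ++ s) := by
  cases c with
  | X => simp [prepL]
  | N => simp [prepL]
  | S => exact prepS_local u s (by omega)
  | R => exact prepR_local u s h

lemma prepL_len (c : Alph) (u : List Alph) :
    u.length ≤ (prepL c u).2.length + 2 ∧ (prepL c u).2.length ≤ u.length + 1 := by
  cases c with
  | X => simp [prepL]
  | N => simp [prepL]
  | S => simp only [prepL]; have := prepS_len u; exact ⟨by omega, by omega⟩
  | R => exact prepR_len u

lemma prepW_local (l : List Alph) (u s : List Alph) (h : 2 * l.length ≤ u.length) :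
    prepW l (u ++ s) = ((prepW l u).1, (prepW l u).2 ++ s)
      ∧ u.length ≤ (prepW l u).2.length + 2 * l.length := by
  induction l generalizing u with
  | nil => simp [prepW]
  | cons c cs ih =>
    have hcs : 2 * cs.length ≤ u.length := by simp at h; omega
    obtain ⟨ih1, ih2⟩ := ih u hcs
    have hlen : 2 ≤ (prepW cs u).2.length := by simp at h; omega
    have hL := prepL_local c (prepW cs u).2 s hlen
    have hLl := prepL_len c (prepW cs u).2
    constructor
    · show (xor (prepW cs (u ++ s)).1 (prepL c (prepW cs (u ++ s)).2).1,
        (prepL c (prepW cs (u ++ s)).2).2) = _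
      rw [ih1]
      simp only [hL]
      rfl
    · show u.length ≤ (prepL c (prepW cs u).2).2.length + 2 * (c :: cs).length
      simp only [List.length_cons]
      omega

lemma prepW_len (l : List Alph) (u : List Alph) :
    (prepW l u).2.length ≤ u.length + l.length := by
  induction l generalizing u with
  | nil => simp [prepW]
  | cons c cs ih =>
    show (prepL c (prepW cs u).2).2.length ≤ _
    have h1 := prepL_len c (prepW cs u).2
    have h2 := ih u
    simp only [List.length_cons]
    omega

lemma prepFull_local (a : Alph) (d g : Bool) (u s : List Alph) (h : 10 ≤ u.length) :
    prepFull a d g (u ++ s)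
      = ((prepFull a d g u).1, (prepFull a d g u).2.1, (prepFull a d g u).2.2 ++ s) := by
  cases a with
  | X => simp [prepFull]
  | N => simp [prepFull]
  | S =>
    show (d, xor (xor g d) (prepS (u ++ s)).1, (prepS (u ++ s)).2) = _
    rw [prepS_local u s (by omega)]
    rfl
  | R =>
    cases d
    · show (false, xor g (prepR (u ++ s)).1, (prepR (u ++ s)).2) = _
      rw [prepR_local u s (by omega)]
      rfl
    · show (true, xor g (prepW [Alph.S, Alph.R, Alph.R, Alph.S] (u ++ s)).1,
        (prepW [Alph.S, Alph.R, Alph.R, Alph.S] (u ++ s)).2) = _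
      rw [(prepW_local [Alph.S, Alph.R, Alph.R, Alph.S] u s (by simp; omega)).1]
      rfl

lemma prepFull_len (a : Alph) (d g : Bool) (u : List Alph) :
    (prepFull a d g u).2.2.length ≤ u.length + 4 := by
  cases a with
  | X => simp [prepFull]
  | N => simp [prepFull]
  | S =>
    show (prepS u).2.length ≤ _
    have := prepS_len u; omega
  | R =>
    cases d
    · show (prepR u).2.length ≤ _
      have := prepR_len u; omega
    · show (prepW [Alph.S, Alph.R, Alph.R, Alph.S] u).2.length ≤ _
      have := prepW_len [Alph.S, Alph.R, Alph.R, Alph.S] u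
      simp at this; omega

/-! ### Marker locality -/

lemma prepS_Nfree {u : List Alph} (h : Alph.N ∉ u) : Alph.N ∉ (prepS u).2 := by
  rcases u with - | ⟨a, t⟩
  · simp [prepS]
  · cases a <;> simp_all [prepS]

lemma prepR_Nfree {u : List Alph} (h : Alph.N ∉ u) : Alph.N ∉ (prepR u).2 := by
  rcases u with - | ⟨a, - | ⟨b, t⟩⟩
  · simp [prepR]
  · cases a <;> simp_all [prepR]
  · cases a <;> cases b <;> simp_all [prepR]

lemma prepL_Nfree (c : Alph) (hc : c ≠ Alph.N) {u : List Alph} (h : Alph.N ∉ u) :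
    Alph.N ∉ (prepL c u).2 := by
  cases c with
  | X => exact h
  | N => exact absurd rfl hc
  | S => exact prepS_Nfree h
  | R => exact prepR_Nfree h

lemma prepW_Nfree (l : List Alph) (hl : Alph.N ∉ l) {u : List Alph} (h : Alph.N ∉ u) :
    Alph.N ∉ (prepW l u).2 := by
  induction l generalizing u with
  | nil => exact h
  | cons c cs ih =>
    have hc : c ≠ Alph.N := by rintro rfl; exact hl List.mem_cons_self
    have hcs : Alph.N ∉ cs := fun hh => hl (List.mem_cons_of_mem _ hh)
    exact prepL_Nfree c hc (ih hcs h)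

lemma prepS_marker (u : List Alph) (h : Alph.N ∉ u) :
    prepS (u ++ [Alph.N]) = ((prepS u).1, (prepS u).2 ++ [Alph.N]) := by
  rcases u with - | ⟨a, t⟩
  · rfl
  · cases a <;> simp [prepS]

lemma prepR_marker (u : List Alph) (h : Alph.N ∉ u) :
    prepR (u ++ [Alph.N]) = ((prepR u).1, (prepR u).2 ++ [Alph.N]) := by
  rcases u with - | ⟨a, - | ⟨b, t⟩⟩
  · rfl
  · cases a <;> simp_all [prepR]
  · cases a <;> cases b <;> simp_all [prepR]

lemma prepL_marker (c : Alph) (hc : c ≠ Alph.N) (u : List Alph) (h : Alph.N ∉ u) :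
    prepL c (u ++ [Alph.N]) = ((prepL c u).1, (prepL c u).2 ++ [Alph.N]) := by
  cases c with
  | X => rfl
  | N => exact absurd rfl hc
  | S => exact prepS_marker u h
  | R => exact prepR_marker u h

lemma prepW_marker (l : List Alph) (hl : Alph.N ∉ l) (u : List Alph) (h : Alph.N ∉ u) :
    prepW l (u ++ [Alph.N]) = ((prepW l u).1, (prepW l u).2 ++ [Alph.N]) := by
  induction l generalizing u with
  | nil => rfl
  | cons c cs ih =>
    have hc : c ≠ Alph.N := by rintro rfl; exact hl List.mem_cons_self
    have hcs : Alph.N ∉ cs := fun hh => hl (List.mem_cons_of_mem _ hh)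
    show (xor (prepW cs (u ++ [Alph.N])).1 (prepL c (prepW cs (u ++ [Alph.N])).2).1,
        (prepL c (prepW cs (u ++ [Alph.N])).2).2) = _
    rw [ih hcs u h]
    simp only [prepL_marker c hc _ (prepW_Nfree cs hcs h)]
    rfl

lemma prepFull_marker (a : Alph) (d g : Bool) (u : List Alph) (h : Alph.N ∉ u) :
    prepFull a d g (u ++ [Alph.N])
      = ((prepFull a d g u).1, (prepFull a d g u).2.1, (prepFull a d g u).2.2 ++ [Alph.N]) := by
  cases a with
  | X => rfl
  | N => rfl
  | S =>
    show (d, xor (xor g d) (prepS (u ++ [Alph.N])).1, (prepS (u ++ [Alph.N])).2) = _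
    rw [prepS_marker u h]
    rfl
  | R =>
    cases d
    · show (false, xor g (prepR (u ++ [Alph.N])).1, (prepR (u ++ [Alph.N])).2) = _
      rw [prepR_marker u h]
      rfl
    · show (true, xor g (prepW [Alph.S, Alph.R, Alph.R, Alph.S] (u ++ [Alph.N])).1,
        (prepW [Alph.S, Alph.R, Alph.R, Alph.S] (u ++ [Alph.N])).2) = _
      rw [prepW_marker [Alph.S, Alph.R, Alph.R, Alph.S] (by decide) u h]
      rfl

/-! ### The pushdown system and its saturation automaton -/

section Machine

variable {σ0 : Type} (M : DFA Alph σ0)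

@[reducible] def Buf : Type := {l : List Alph // l.length ≤ 10}
@[reducible] def BufV : Type := {l : List Alph // l.length ≤ 14}
@[reducible] def PSt (σ0 : Type) : Type := σ0 × Bool × Bool × Option (Alph × Buf)
@[reducible] def SSt (σ0 : Type) : Type := (PSt σ0 ⊕ (PSt σ0 × BufV)) ⊕ Unit

def ValidU (b : List Alph) : Prop :=
  (b.length = 10 ∧ Alph.N ∉ b) ∨ (∃ b'', b = b'' ++ [Alph.N] ∧ Alph.N ∉ b'')

inductive Reach : PSt σ0 → List Alph → Prop
  | init (q : σ0) (h : q ∈ M.accept) : Reach (q, false, false, none) [Alph.N]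
  | start (q : σ0) (a : Alph) (d g : Bool) (s : List Alph) (b : Buf) (hb : b.1 = [])
      (h : Reach (M.step q a, d, g, none) s) : Reach (q, d, g, some (a, b)) s
  | pop (q : σ0) (a : Alph) (d g : Bool) (c : Alph) (s : List Alph) (b b' : Buf)
      (hlen : b.1.length < 10) (hN : Alph.N ∉ b.1) (hb' : b'.1 = b.1 ++ [c])
      (h : Reach (q, d, g, some (a, b)) (c :: s)) : Reach (q, d, g, some (a, b')) s
  | app (q : σ0) (a : Alph) (d g d' g' : Bool) (v s : List Alph) (b : Buf)
      (hV : ValidU b.1) (hp : prepFull a d g b.1 = (d', g', v))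
      (h : Reach (q, d, g, some (a, b)) s) : Reach (q, d', g', none) (v ++ s)

inductive Ed : SSt σ0 → Option Alph → SSt σ0 → Prop
  | initE (q : σ0) (h : q ∈ M.accept) :
      Ed (Sum.inl (Sum.inl (q, false, false, none))) (some Alph.N) (Sum.inr ())
  | startE (q a d g) (b : Buf) (hb : b.1 = []) :
      Ed (Sum.inl (Sum.inl (q, d, g, some (a, b)))) none
        (Sum.inl (Sum.inl (M.step q a, d, g, none)))
  | popE (q a d g c) (b b' : Buf) (x) (hlen : b.1.length < 10) (hN : Alph.N ∉ b.1)
      (hb' : b'.1 = b.1 ++ [c])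
      (h : Ed (Sum.inl (Sum.inl (q, d, g, some (a, b)))) (some c) x) :
      Ed (Sum.inl (Sum.inl (q, d, g, some (a, b')))) none x
  | appE0 (q a d g d' g') (b : Buf) (hV : ValidU b.1)
      (hp : prepFull a d g b.1 = (d', g', [])) :
      Ed (Sum.inl (Sum.inl (q, d', g', none))) none (Sum.inl (Sum.inl (q, d, g, some (a, b))))
  | appE1 (q a d g d' g' c) (b : Buf) (hV : ValidU b.1)
      (hp : prepFull a d g b.1 = (d', g', [c])) :
      Ed (Sum.inl (Sum.inl (q, d', g', none))) (some c) (Sum.inl (Sum.inl (q, d, g, some (a, b))))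
  | appE2 (q a d g d' g' c) (l : List Alph) (hl : l ≠ []) (b : Buf) (lv : BufV) (hlv : lv.1 = l)
      (hV : ValidU b.1) (hp : prepFull a d g b.1 = (d', g', c :: l)) :
      Ed (Sum.inl (Sum.inl (q, d', g', none))) (some c)
        (Sum.inl (Sum.inr ((q, d, g, some (a, b)), lv)))
  | midStepE (p : PSt σ0) (c) (l : List Alph) (hl : l ≠ []) (lv lv' : BufV)
      (hlv : lv.1 = c :: l) (hlv' : lv'.1 = l) :
      Ed (Sum.inl (Sum.inr (p, lv))) (some c) (Sum.inl (Sum.inr (p, lv')))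
  | midEndE (p : PSt σ0) (c) (lv : BufV) (hlv : lv.1 = [c]) :
      Ed (Sum.inl (Sum.inr (p, lv))) (some c) (Sum.inl (Sum.inl p))
  | epsAbs (x y z o) (h1 : Ed x none y) (h2 : Ed y o z) : Ed x o z

def Sem : SSt σ0 → List Alph → Prop
  | Sum.inl (Sum.inl p), s => Reach M p s
  | Sum.inl (Sum.inr (p, lv)), s => ∃ s', s = lv.1 ++ s' ∧ Reach M p s'
  | Sum.inr _, s => s = []

def consO (o : Option Alph) (s : List Alph) : List Alph := o.elim s (· :: s)

lemma ed_sound {x o y} (h : Ed M x o y) : ∀ s, Sem M y s → Sem M x (consO o s) := by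
  induction h with
  | initE q h =>
    intro s hs
    have : s = [] := hs
    subst this
    exact Reach.init q h
  | startE q a d g b hb =>
    intro s hs
    exact Reach.start q a _ _ s b hb hs
  | popE q a d g c b b' x hlen hN hb' h ih =>
    intro s hs
    exact Reach.pop q a _ _ c s b b' hlen hN hb' (ih s hs)
  | appE0 q a d g d' g' b hV hp =>
    intro s hs
    have := Reach.app q a d g d' g' [] s b hV hp hs
    simpa [Sem, consO] using this
  | appE1 q a d g d' g' c b hV hp =>
    intro s hs
    have := Reach.app q a d g d' g' [c] s b hV hp hs
    simpa [Sem, consO] using this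
  | appE2 q a d g d' g' c l hl b lv hlv hV hp =>
    intro s hs
    obtain ⟨s', rfl, hr⟩ := hs
    have := Reach.app q a d g d' g' (c :: l) s' b hV hp hr
    rw [hlv]
    simpa [Sem, consO] using this
  | midStepE p c l hl lv lv' hlv hlv' =>
    intro s hs
    obtain ⟨s', rfl, hr⟩ := hs
    exact ⟨s', by rw [hlv, hlv']; rfl, hr⟩
  | midEndE p c lv hlv =>
    intro s hs
    exact ⟨s, by rw [hlv]; rfl, hs⟩
  | epsAbs x y z o h1 h2 ih1 ih2 =>
    intro s hs
    exact ih1 _ (ih2 s hs)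

inductive Ptf : SSt σ0 → List Alph → Prop
  | done : Ptf (Sum.inr ()) []
  | eps (x y s) (h : Ed M x none y) (hp : Ptf y s) : Ptf x s
  | step (x y c s) (h : Ed M x (some c) y) (hp : Ptf y s) : Ptf x (c :: s)

lemma ptf_sound {x s} (h : Ptf M x s) : Sem M x s := by
  induction h with
  | done => rfl
  | eps x y s h hp ih => exact ed_sound M h s ih
  | step x y c s h hp ih => exact ed_sound M h s ih

lemma ptf_cons {x w} (h : Ptf M x w) :
    ∀ c s, w = c :: s → ∃ y, Ed M x (some c) y ∧ Ptf M y s := by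
  induction h with
  | done => intro c s h; exact absurd h (by simp)
  | eps x y s h hp ih =>
    intro c s' rfl
    obtain ⟨z, hz, hpz⟩ := ih c s' rfl
    exact ⟨z, Ed.epsAbs _ _ _ _ h hz, hpz⟩
  | step x y c s h hp ih =>
    intro c' s' heq
    obtain ⟨rfl, rfl⟩ : c = c' ∧ s = s' := by
      constructor <;> [exact (List.cons.injEq .. ▸ heq).1; exact (List.cons.injEq .. ▸ heq).2]
    exact ⟨y, h, hp⟩

lemma mid_chain : ∀ (l : List Alph), l ≠ [] → ∀ (lv : BufV), lv.1 = l → ∀ (p : PSt σ0)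
    (s : List Alph), Ptf M (Sum.inl (Sum.inl p)) s → Ptf M (Sum.inl (Sum.inr (p, lv))) (l ++ s) := by
  intro l
  induction l with
  | nil => intro h; exact absurd rfl h
  | cons c l ih =>
    intro _ lv hlv p s hp
    rcases eq_or_ne l [] with rfl | hl
    · exact Ptf.step _ _ _ _ (Ed.midEndE p c lv hlv) hp
    · have hlen : l.length ≤ 14 := by
        have := lv.2; rw [hlv] at this; simp at this; omega
      exact Ptf.step _ _ _ _ (Ed.midStepE p c l hl lv ⟨l, hlen⟩ hlv rfl) (ih hl ⟨l, hlen⟩ rfl p s hp)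

lemma reach_ptf {p s} (h : Reach M p s) : Ptf M (Sum.inl (Sum.inl p)) s := by
  induction h with
  | init q h => exact Ptf.step _ _ _ _ (Ed.initE q h) Ptf.done
  | start q a d g s b hb h ih => exact Ptf.eps _ _ _ (Ed.startE q a d g b hb) ih
  | pop q a d g c s b b' hlen hN hb' h ih =>
    obtain ⟨y, hy, hpy⟩ := ptf_cons M ih c s rfl
    exact Ptf.eps _ _ _ (Ed.popE q a d g c b b' y hlen hN hb' hy) hpy
  | app q a d g d' g' v s b hV hp h ih =>
    rcases v with - | ⟨c, l⟩
    · exact Ptf.eps _ _ _ (Ed.appE0 q a d g d' g' b hV hp) ih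
    rcases eq_or_ne l [] with rfl | hl
    · exact Ptf.step _ _ _ _ (Ed.appE1 q a d g d' g' c b hV hp) ih
    · have hlen : l.length ≤ 14 := by
        have h4 := prepFull_len a d g b.1
        rw [hp] at h4
        have := b.2
        simp at h4
        omega
      exact Ptf.step _ _ _ _
        (Ed.appE2 q a d g d' g' c l hl b ⟨l, hlen⟩ rfl hV hp)
        (mid_chain M l hl ⟨l, hlen⟩ rfl _ s ih)

/-! ### Correspondence between reachable configurations and canonical forms -/

lemma srOnly_not_N {v : List Alph} (h : SRonly v) : Alph.N ∉ v := by
  intro hh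
  rcases h _ hh with h' | h' <;> exact absurd h' (by decide)

lemma split_marker : ∀ (b core s : List Alph), b ++ s = core ++ [Alph.N] → Alph.N ∉ b →
    ∃ s₀, core = b ++ s₀ ∧ s = s₀ ++ [Alph.N] := by
  intro b
  induction b with
  | nil => intro core s h _; exact ⟨core, rfl, h⟩
  | cons x b ih =>
    intro core s h hN
    rcases core with - | ⟨y, core'⟩
    · rcases b with - | ⟨z, b'⟩
      · simp at h
        exact absurd (h.1 ▸ (List.mem_cons_self (a := x) (l := []))) hN
      · simp at h
    · rw [List.cons_append, List.cons_append, List.cons.injEq] at h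
      obtain ⟨rfl, h2⟩ := h
      obtain ⟨s₀, hc, hs⟩ := ih core' s h2 (fun hh => hN (List.mem_cons_of_mem _ hh))
      exact ⟨s₀, by rw [hc]; rfl, hs⟩

def InvO (M : DFA Alph σ0) : PSt σ0 → List Alph → Prop
  | (q, d, g, none), s => ∃ t, M.evalFrom q t ∈ M.accept ∧ (canonT t).1 = d ∧
      (canonT t).2.1 = g ∧ s = (canonT t).2.2 ++ [Alph.N]
  | (q, d, g, some (a, b)), s => ∃ t, M.evalFrom q (a :: t) ∈ M.accept ∧ (canonT t).1 = d ∧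
      (canonT t).2.1 = g ∧ b.1 ++ s = (canonT t).2.2 ++ [Alph.N]

lemma evalFrom_cons (M : DFA Alph σ0) (q : σ0) (a : Alph) (t : List Alph) :
    M.evalFrom q (a :: t) = M.evalFrom (M.step q a) t := rfl

lemma reach_inv (M : DFA Alph σ0) {p s} (h : Reach M p s) : InvO M p s := by
  induction h with
  | init q h => exact ⟨[], h, rfl, rfl, rfl⟩
  | start q a d g s b hb h ih =>
    obtain ⟨t, h1, h2, h3, h4⟩ := ih
    exact ⟨t, by rw [evalFrom_cons]; exact h1, h2, h3, by rw [hb]; simpa using h4⟩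
  | pop q a d g c s b b' hlen hN hb' h ih =>
    obtain ⟨t, h1, h2, h3, h4⟩ := ih
    refine ⟨t, h1, h2, h3, ?_⟩
    rw [hb']
    rw [← h4]
    simp
  | app q a d g d' g' v s b hV hp h ih =>
    obtain ⟨t, h1, h2, h3, h4⟩ := ih
    have hcanon : canonT (a :: t) = prepFull a d g (canonT t).2.2 := by
      rw [canonT_cons, h2, h3]
    rcases hV with ⟨hlen, hNb⟩ | ⟨b'', hb'', hNb⟩
    · -- long prefix case
      obtain ⟨s₀, hcore, hs⟩ := split_marker b.1 (canonT t).2.2 s h4 hNb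
      have hloc := prepFull_local a d g b.1 s₀ (by omega)
      refine ⟨a :: t, h1, ?_, ?_, ?_⟩
      · rw [hcanon, hcore, hloc, hp]
      · rw [hcanon, hcore, hloc, hp]
      · rw [hcanon, hcore, hloc, hp]
        show v ++ s = v ++ s₀ ++ [Alph.N]
        rw [hs, List.append_assoc]
    · -- marker case
      rw [hb''] at h4 hp
      have hNcore : Alph.N ∉ (canonT t).2.2 := srOnly_not_N (good_canonT t).1
      obtain ⟨s₀, hcore, hs⟩ := split_marker b'' (canonT t).2.2 ([Alph.N] ++ s)
        (by rw [← h4]; simp) hNb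
      have hs₀ : s₀ = [] := by
        rcases s₀ with - | ⟨x, s₀'⟩
        · rfl
        · exfalso
          simp only [List.cons_append, List.nil_append, List.cons.injEq] at hs
          obtain ⟨hx, -⟩ := hs
          exact hNcore (hcore ▸ List.mem_append_right b'' (hx ▸ (List.mem_cons_self (a := x) (l := s₀'))))
      subst hs₀
      rw [List.append_nil] at hcore
      have hsnil : s = [] := by
        simpa using hs
      subst hsnil
      have hmark := prepFull_marker a d g b'' (hNb)
      rw [hp] at hmark
      have e1 : d' = (prepFull a d g b'').1 := congrArg Prod.fst hmark
      have e2 : g' = (prepFull a d g b'').2.1 := congrArg (fun x => x.2.1) hmark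
      have e3 : v = (prepFull a d g b'').2.2 ++ [Alph.N] := congrArg (fun x => x.2.2) hmark
      refine ⟨a :: t, h1, ?_, ?_, ?_⟩
      · rw [hcanon, hcore]; exact e1.symm
      · rw [hcanon, hcore]; exact e2.symm
      · rw [hcanon, hcore, e3]
        simp

lemma pops (M : DFA Alph σ0) (q : σ0) (a : Alph) (d g : Bool) :
    ∀ (b1 : List Alph) (b0 b' : Buf) (s : List Alph), b'.1 = b0.1 ++ b1 →
      (∀ c ∈ b1.dropLast, c ≠ Alph.N) → Alph.N ∉ b0.1 → (b0.1 ++ b1).length ≤ 10 →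
      Reach M (q, d, g, some (a, b0)) (b1 ++ s) → Reach M (q, d, g, some (a, b')) s := by
  intro b1
  induction b1 with
  | nil =>
    intro b0 b' s hb' _ _ _ h
    have : b' = b0 := Subtype.ext (by rw [hb']; simp)
    subst this
    simpa using h
  | cons c b1 ih =>
    intro b0 b' s hb' hdl hN0 hlen h
    have hlen0 : b0.1.length < 10 := by
      have h5 := hlen
      simp only [List.length_append, List.length_cons] at h5
      omega
    have hbc : (b0.1 ++ [c]).length ≤ 10 := by
      have h5 := hlen
      simp only [List.length_append, List.length_cons, List.length_nil] at h5 ⊢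
      omega
    have hstep : Reach M (q, d, g, some (a, (⟨b0.1 ++ [c], hbc⟩ : Buf))) (b1 ++ s) :=
      Reach.pop q a d g c (b1 ++ s) b0 _ hlen0 hN0 rfl (by simpa using h)
    rcases eq_or_ne b1 [] with rfl | hb1
    · have hbeq : b' = (⟨b0.1 ++ [c], hbc⟩ : Buf) := Subtype.ext (by rw [hb'])
      rw [hbeq]
      simpa using hstep
    · have hcN : c ≠ Alph.N := by
        apply hdl
        rw [List.dropLast_cons_of_ne_nil hb1]
        exact List.mem_cons_self
      refine ih _ b' s (by rw [hb']; simp) ?_ ?_ (by simpa using hlen) hstep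
      · intro x hx
        apply hdl
        rw [List.dropLast_cons_of_ne_nil hb1]
        exact List.mem_cons_of_mem _ hx
      · intro hx
        rcases List.mem_append.mp hx with hx | hx
        · exact hN0 hx
        · have hxc : Alph.N = c := by simpa using hx
          exact hcN hxc.symm

lemma canon_reach (M : DFA Alph σ0) :
    ∀ (t : List Alph) (q : σ0), M.evalFrom q t ∈ M.accept →
    Reach M (q, (canonT t).1, (canonT t).2.1, none) ((canonT t).2.2 ++ [Alph.N]) := by
  intro t
  induction t with
  | nil => intro q h; exact Reach.init q h
  | cons a t ih =>
    intro q h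
    rw [evalFrom_cons] at h
    have hr := ih (M.step q a) h
    rcases hct : canonT t with ⟨d0, g0, core⟩
    rw [hct] at hr
    have hNcore : Alph.N ∉ core := by
      have h5 := srOnly_not_N (good_canonT t).1
      rw [hct] at h5; exact h5
    have hcanon : canonT (a :: t) = prepFull a d0 g0 core := by
      rw [canonT_cons, hct]
    have hstart : Reach M (q, d0, g0, some (a, (⟨[], by simp⟩ : Buf))) (core ++ [Alph.N]) :=
      Reach.start q a _ _ _ _ rfl hr
    rw [hcanon]
    by_cases h10 : 10 ≤ core.length
    · have hb1len : (core.take 10).length = 10 := by simp; omega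
      have hNb1 : Alph.N ∉ core.take 10 := fun hx => hNcore (List.take_subset _ _ hx)
      have hbuf : (core.take 10).length ≤ 10 := by omega
      have hpop : Reach M (q, d0, g0, some (a, ⟨core.take 10, hbuf⟩))
          (core.drop 10 ++ [Alph.N]) := by
        apply pops M q a d0 g0 (core.take 10) (⟨[], by simp⟩ : Buf) ⟨core.take 10, hbuf⟩
          (core.drop 10 ++ [Alph.N])
          (by simp) (fun c hc hh => hNb1 (hh ▸ List.dropLast_subset _ hc)) (by simp)
          (by simp)
        have h6 : core.take 10 ++ (core.drop 10 ++ [Alph.N]) = core ++ [Alph.N] := by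
          rw [← List.append_assoc, List.take_append_drop]
        rw [h6]
        exact hstart
      rcases hres : prepFull a d0 g0 (core.take 10) with ⟨d', g', v⟩
      have happ := Reach.app q a d0 g0 d' g' v _ ⟨core.take 10, hbuf⟩
        (Or.inl ⟨hb1len, hNb1⟩) hres hpop
      have hloc := prepFull_local a d0 g0 (core.take 10) (core.drop 10) (by omega)
      rw [hres] at hloc
      have hfin : prepFull a d0 g0 core = (d', g', v ++ core.drop 10) := by
        conv_lhs => rw [← List.take_append_drop 10 core]
        rw [hloc]
      rw [hfin]
      show Reach M (q, d', g', none) ((v ++ core.drop 10) ++ [Alph.N])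
      rw [List.append_assoc]
      exact happ
    · push_neg at h10
      have hbuf : (core ++ [Alph.N]).length ≤ 10 := by simp; omega
      have hpop : Reach M (q, d0, g0, some (a, ⟨core ++ [Alph.N], hbuf⟩)) [] := by
        apply pops M q a d0 g0 (core ++ [Alph.N]) (⟨[], by simp⟩ : Buf)
          ⟨core ++ [Alph.N], hbuf⟩ []
          (by simp) (fun c hc hh => by
            rw [List.dropLast_concat] at hc
            exact hNcore (hh ▸ hc)) (by simp) (by simpa using hbuf)
        simpa using hstart
      rcases hres : prepFull a d0 g0 core with ⟨d', g', v⟩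
      have hmark := prepFull_marker a d0 g0 core hNcore
      rw [hres] at hmark
      have happ := Reach.app q a d0 g0 d' g' (v ++ [Alph.N]) [] ⟨core ++ [Alph.N], hbuf⟩
        (Or.inr ⟨core, rfl, hNcore⟩) (by exact hmark) hpop
      show Reach M (q, d', g', none) (v ++ [Alph.N])
      simpa using happ

/-! ### The NFA for the canonical language -/

def entry (M : DFA Alph σ0) (d g : Bool) : SSt σ0 := Sum.inl (Sum.inl (M.start, d, g, none))

inductive trel (M : DFA Alph σ0) : (Bool ⊕ SSt σ0) → Alph → (Bool ⊕ SSt σ0) → Prop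
  | toN : trel M (Sum.inl false) Alph.N (Sum.inl true)
  | toX0 : trel M (Sum.inl false) Alph.X (Sum.inr (entry M false true))
  | toX1 : trel M (Sum.inl true) Alph.X (Sum.inr (entry M true true))
  | core0 (a z) (ha : a = Alph.S ∨ a = Alph.R) (h : Ed M (entry M false false) (some a) z) :
      trel M (Sum.inl false) a (Sum.inr z)
  | core1 (a z) (ha : a = Alph.S ∨ a = Alph.R) (h : Ed M (entry M true false) (some a) z) :
      trel M (Sum.inl true) a (Sum.inr z)
  | coreS (x a z) (ha : a = Alph.S ∨ a = Alph.R) (h : Ed M x (some a) z) :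
      trel M (Sum.inr x) a (Sum.inr z)

def acceptT (M : DFA Alph σ0) : Set (Bool ⊕ SSt σ0) :=
  {x | match x with
       | Sum.inl false => Ptf M (entry M false false) [Alph.N]
       | Sum.inl true => Ptf M (entry M true false) [Alph.N]
       | Sum.inr z => Ptf M z [Alph.N]}

inductive CAcc (M : DFA Alph σ0) : SSt σ0 → List Alph → Prop
  | nil (x) (h : Ptf M x [Alph.N]) : CAcc M x []
  | cons (x a z v) (ha : a = Alph.S ∨ a = Alph.R) (h : Ed M x (some a) z) (hr : CAcc M z v) :
      CAcc M x (a :: v)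

lemma cacc_iff (M : DFA Alph σ0) (x : SSt σ0) (v : List Alph) :
    CAcc M x v ↔ (SRonly v ∧ Ptf M x (v ++ [Alph.N])) := by
  constructor
  · intro h
    induction h with
    | nil x h => exact ⟨fun a ha => absurd ha List.not_mem_nil, h⟩
    | cons x a z v ha h hr ih =>
      refine ⟨?_, Ptf.step _ _ _ _ h ih.2⟩
      intro b hb
      rcases List.mem_cons.mp hb with rfl | hb
      · exact ha
      · exact ih.1 b hb
  · rintro ⟨hsr, hp⟩
    induction v generalizing x with
    | nil => exact CAcc.nil x hp
    | cons a v ih =>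
      obtain ⟨z, hz, hpz⟩ := ptf_cons M hp a (v ++ [Alph.N]) rfl
      exact CAcc.cons x a z v (hsr a (List.mem_cons_self (a := a) (l := v))) hz
        (ih z (srOnly_tail hsr) hpz)

inductive RP (M : DFA Alph σ0) : (Bool ⊕ SSt σ0) → List Alph → (Bool ⊕ SSt σ0) → Prop
  | nil (x) : RP M x [] x
  | cons (x a y w z) (h : trel M x a y) (hr : RP M y w z) : RP M x (a :: w) z

def theNFA (M : DFA Alph σ0) : NFA Alph (Bool ⊕ SSt σ0) where
  step := fun x a => {y | trel M x a y}
  start := {Sum.inl false}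
  accept := acceptT M

lemma rp_nil_iff (M : DFA Alph σ0) (x y : Bool ⊕ SSt σ0) : RP M x [] y ↔ x = y := by
  constructor
  · intro h; cases h; rfl
  · rintro rfl; exact RP.nil x

lemma rp_cons_iff (M : DFA Alph σ0) (x y : Bool ⊕ SSt σ0) (a : Alph) (w : List Alph) :
    RP M x (a :: w) y ↔ ∃ z, trel M x a z ∧ RP M z w y := by
  constructor
  · intro h
    cases h with
    | cons _ _ z _ _ h hr => exact ⟨z, h, hr⟩
  · rintro ⟨z, hz, hr⟩
    exact RP.cons _ _ _ _ _ hz hr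

lemma nfa_evalFrom (M : DFA Alph σ0) (w : List Alph) :
    ∀ (Q : Set (Bool ⊕ SSt σ0)) (y : Bool ⊕ SSt σ0),
      y ∈ (theNFA M).evalFrom Q w ↔ ∃ x ∈ Q, RP M x w y := by
  induction w with
  | nil =>
    intro Q y
    constructor
    · intro h; exact ⟨y, h, RP.nil y⟩
    · rintro ⟨x, hx, h⟩; rw [rp_nil_iff] at h; exact h ▸ hx
  | cons a w ih =>
    intro Q y
    constructor
    · intro h
      obtain ⟨x', hx', hrp⟩ := (ih _ y).mp h
      obtain ⟨x, hx, hstep⟩ := NFA.mem_stepSet.mp hx'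
      exact ⟨x, hx, RP.cons _ _ _ _ _ hstep hrp⟩
    · rintro ⟨x, hx, h⟩
      rw [rp_cons_iff] at h
      obtain ⟨z, hz, hrp⟩ := h
      exact (ih _ y).mpr ⟨z, NFA.mem_stepSet.mpr ⟨x, hx, hz⟩, hrp⟩

lemma nfa_accepts_iff (M : DFA Alph σ0) (w : List Alph) :
    w ∈ (theNFA M).accepts ↔ ∃ y ∈ acceptT M, RP M (Sum.inl false) w y := by
  rw [NFA.mem_accepts]
  constructor
  · rintro ⟨y, hy, hev⟩
    obtain ⟨x, hx, hrp⟩ := (nfa_evalFrom M w _ y).mp hev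
    have : x = Sum.inl false := hx
    subst this
    exact ⟨y, hy, hrp⟩
  · rintro ⟨y, hy, hrp⟩
    exact ⟨y, hy, (nfa_evalFrom M w _ y).mpr ⟨Sum.inl false, rfl, hrp⟩⟩

lemma rp_core (M : DFA Alph σ0) {z : SSt σ0} {v : List Alph} (h : CAcc M z v) :
    ∃ y, y ∈ acceptT M ∧ RP M (Sum.inr z) v y := by
  induction h with
  | nil x h => exact ⟨Sum.inr x, h, RP.nil _⟩
  | cons x a z v ha h hr ih =>
    obtain ⟨y, hy, hrp⟩ := ih
    exact ⟨y, hy, RP.cons _ _ _ _ _ (trel.coreS x a z ha h) hrp⟩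

lemma rp_core_inv (M : DFA Alph σ0) : ∀ (v : List Alph) (x : SSt σ0) (y : Bool ⊕ SSt σ0),
    RP M (Sum.inr x) v y → y ∈ acceptT M → CAcc M x v := by
  intro v
  induction v with
  | nil =>
    intro x y h hy
    rw [rp_nil_iff] at h
    subst h
    exact CAcc.nil x hy
  | cons a v ih =>
    intro x y h hy
    rw [rp_cons_iff] at h
    obtain ⟨z, hz, hrp⟩ := h
    cases hz with
    | coreS x a z ha h => exact CAcc.cons x a z v ha h (ih z y hrp hy)

lemma accept_iff (M : DFA Alph σ0) (w : List Alph) :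
    w ∈ (theNFA M).accepts ↔ ∃ d g v, w = toWord (d, g, v) ∧ CAcc M (entry M d g) v := by
  rw [nfa_accepts_iff]
  constructor
  · rintro ⟨y, hy, hrp⟩
    rcases w with - | ⟨a, w'⟩
    · rw [rp_nil_iff] at hrp
      subst hrp
      exact ⟨false, false, [], rfl, CAcc.nil _ hy⟩
    rw [rp_cons_iff] at hrp
    obtain ⟨z, hz, hrp⟩ := hrp
    cases hz with
    | toN =>
      rcases w' with - | ⟨b, w''⟩
      · rw [rp_nil_iff] at hrp
        subst hrp
        exact ⟨true, false, [], rfl, CAcc.nil _ hy⟩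
      rw [rp_cons_iff] at hrp
      obtain ⟨z', hz', hrp⟩ := hrp
      cases hz' with
      | toX1 => exact ⟨true, true, w'', rfl, rp_core_inv M w'' _ _ hrp hy⟩
      | core1 b z' hb hEd =>
        exact ⟨true, false, b :: w'', rfl,
          CAcc.cons _ b z' w'' hb hEd (rp_core_inv M w'' _ _ hrp hy)⟩
    | toX0 => exact ⟨false, true, w', rfl, rp_core_inv M w' _ _ hrp hy⟩
    | core0 a z ha hEd =>
      exact ⟨false, false, a :: w', rfl,
        CAcc.cons _ a z w' ha hEd (rp_core_inv M w' _ _ hrp hy)⟩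
  · rintro ⟨d, g, v, rfl, hca⟩
    cases d <;> cases g
    · -- word = v
      cases hca with
      | nil x h => exact ⟨Sum.inl false, h, RP.nil _⟩
      | cons x a z v' ha hEd hca' =>
        obtain ⟨y, hy, hrp⟩ := rp_core M hca'
        exact ⟨y, hy, RP.cons _ _ _ _ _ (trel.core0 a z ha hEd) hrp⟩
    · -- word = X :: v
      obtain ⟨y, hy, hrp⟩ := rp_core M hca
      exact ⟨y, hy, RP.cons _ _ _ _ _ trel.toX0 hrp⟩
    · -- word = N :: v
      cases hca with
      | nil x h => exact ⟨Sum.inl true, h, RP.cons _ _ _ _ _ trel.toN (RP.nil _)⟩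
      | cons x a z v' ha hEd hca' =>
        obtain ⟨y, hy, hrp⟩ := rp_core M hca'
        exact ⟨y, hy, RP.cons _ _ _ _ _ trel.toN
          (RP.cons _ _ _ _ _ (trel.core1 a z ha hEd) hrp)⟩
    · -- word = N :: X :: v
      obtain ⟨y, hy, hrp⟩ := rp_core M hca
      exact ⟨y, hy, RP.cons _ _ _ _ _ trel.toN (RP.cons _ _ _ _ _ trel.toX1 hrp)⟩

lemma main_lang (M : DFA Alph σ0) (w : List Alph) :
    w ∈ (theNFA M).accepts ↔ ∃ t, M.evalFrom M.start t ∈ M.accept ∧ w = toWord (canonT t) := by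
  rw [accept_iff]
  constructor
  · rintro ⟨d, g, v, rfl, hca⟩
    obtain ⟨hsr, hptf⟩ := (cacc_iff M _ v).mp hca
    have hsem := ptf_sound M hptf
    have hreach : Reach M (M.start, d, g, none) (v ++ [Alph.N]) := hsem
    have hinv := reach_inv M hreach
    obtain ⟨t, h1, h2, h3, h4⟩ := hinv
    have hv : v = (canonT t).2.2 := List.append_cancel_right h4
    refine ⟨t, h1, ?_⟩
    have : canonT t = (d, g, v) := by
      rcases hc : canonT t with ⟨d0, g0, v0⟩
      rw [hc] at h2 h3 hv
      simp only at h2 h3 hv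
      rw [h2, h3, hv]
    rw [this]
  · rintro ⟨t, h1, rfl⟩
    have hreach := canon_reach M t M.start h1
    have hptf := reach_ptf M hreach
    have hsr : SRonly (canonT t).2.2 := (good_canonT t).1
    have hca : CAcc M (entry M (canonT t).1 (canonT t).2.1) (canonT t).2.2 :=
      (cacc_iff M _ _).mpr ⟨hsr, hptf⟩
    exact ⟨(canonT t).1, (canonT t).2.1, (canonT t).2.2, by simp, hca⟩

end Machine

lemma finite_boundedList (n : ℕ) : Finite {l : List Alph // l.length ≤ n} := by
  apply Finite.of_surjective
    (fun x : Σ m : Fin (n+1), (Fin m → Alph) =>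
      (⟨List.ofFn x.2, by simpa using Nat.lt_succ_iff.mp x.1.2⟩ : {l : List Alph // l.length ≤ n}))
  intro l
  refine ⟨⟨⟨l.1.length, Nat.lt_succ_of_le l.2⟩, fun i => l.1.get i⟩, ?_⟩
  exact Subtype.ext (List.ofFn_get l.1)

instance : Finite Buf := finite_boundedList 10
instance : Finite BufV := finite_boundedList 14

instance finiteOption {α : Type} [Finite α] : Finite (Option α) := by
  apply Finite.of_injective
    (fun o : Option α => (match o with | none => Sum.inl () | some a => Sum.inr a : Unit ⊕ α))
  rintro (-|a) (-|b) h <;> simp_all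

end CanonAut

open CanonAut in
/-- For every regular language `L` over Σ there is a regular language `L'` consisting only of
canonical words with `φ(L') = φ(L)`. -/
theorem canonical_automaton (L : Language Alph) (hL : L.IsRegular) :
    ∃ L' : Language Alph, L'.IsRegular ∧ (∀ w ∈ L', Canonical w) ∧ phi '' L' = phi '' L := by
  obtain ⟨σ0, finσ, M, hM⟩ := hL
  haveI := finσ
  haveI h1 : Finite Buf := inferInstance
  haveI h2 : Finite BufV := inferInstance
  haveI h3 : Finite (Option (Alph × Buf)) := inferInstance
  haveI h4 : Finite (PSt σ0) := inferInstance
  haveI hfin : Finite (Bool ⊕ SSt σ0) := inferInstance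
  refine ⟨(theNFA M).accepts, ?_, ?_, ?_⟩
  · exact ⟨Set (Bool ⊕ SSt σ0), Fintype.ofFinite _, (theNFA M).toDFA, NFA.toDFA_correct⟩
  · intro w hw
    obtain ⟨t, ht, rfl⟩ := (main_lang M w).mp hw
    exact canonical_toWord (good_canonT t)
  · ext m
    constructor
    · rintro ⟨w, hw, rfl⟩
      obtain ⟨t, ht, rfl⟩ := (main_lang M w).mp hw
      refine ⟨t, ?_, (phi_canonT t).symm⟩
      rw [← hM]
      exact (DFA.mem_accepts M).mpr ht
    · rintro ⟨t, ht, rfl⟩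
      have hacc : t ∈ M.accepts := by rw [hM]; exact ht
      have ht' : M.evalFrom M.start t ∈ M.accept := (DFA.mem_accepts M).mp hacc
      exact ⟨toWord (canonT t), (main_lang M _).mpr ⟨t, ht', rfl⟩, phi_canonT t⟩
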